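/- For the colored permutation group G_{r,n} = Z_r ≀ S_n with r ≥ 1 and n ≥ 1, the signed generating function satisfies ∑_{π ∈ G_{r,n}} q^{exc(π)} (−1)^{cyc(π)} = −(q^r − 1)^n / (q − 1), where exc(π) = r·exc_A(π) + csum(π), exc_A(π) = #{i : z_i = 0 and σ(i) > i}, and csum(π) = z_1 + ⋯ + z_n. -/

import Mathlib

open Finset Polynomial

set_option maxHeartbeats 1000000

/-- `exc_A` for a colored permutation `π = (z, σ) ∈ ℤ_r ≀ S_n`:
the number of indices `i` with zero color and `σ(i) > i`. -/
def excAc {r n : ℕ} (π : (Fin n → ZMod r) × Equiv.Perm (Fin n)) : ℕ :=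
  (Finset.univ.filter fun i => (π.1 i).val = 0 ∧ i < π.2 i).card

/-- `csum`: the sum of the colors (taken as representatives in `{0,…,r−1}`). -/
def csumc {r n : ℕ} (π : (Fin n → ZMod r) × Equiv.Perm (Fin n)) : ℕ :=
  ∑ i, (π.1 i).val

/-- The excedance number `exc(π) = r·exc_A(π) + csum(π)`. -/
def excc {r n : ℕ} (π : (Fin n → ZMod r) × Equiv.Perm (Fin n)) : ℕ :=
  r * excAc π + csumc π

/-- Number of cycles of the underlying permutation, counting fixed points. -/
def cyc {n : ℕ} (σ : Equiv.Perm (Fin n)) : ℕ :=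
  (Finset.univ.filter fun i => σ i = i).card + σ.cycleType.card

noncomputable def Sp (r : ℕ) [NeZero r] : ℚ[X] := ∑ c : ZMod r, (X : ℚ[X]) ^ c.val

lemma Sp_eq_range (r : ℕ) [NeZero r] : Sp r = ∑ k ∈ range r, (X : ℚ[X]) ^ k := by
  refine Finset.sum_nbij' (fun c => c.val) (fun k => (k : ZMod r)) ?_ ?_ ?_ ?_ ?_
  · intro c _; exact mem_range.2 c.val_lt
  · intro k _; exact mem_univ _
  · intro c _; exact ZMod.natCast_rightInverse c
  · intro k hk; exact ZMod.val_cast_of_lt (mem_range.1 hk)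
  · intro c _; rfl

lemma hSp (r : ℕ) [NeZero r] : ((X : ℚ[X]) - 1) * Sp r = X ^ r - 1 := by
  rw [Sp_eq_range, mul_comm, geom_sum_mul]

lemma colorsum (r : ℕ) [NeZero r] (P : Prop) [Decidable P] :
    ∑ c : ZMod r, (X : ℚ[X]) ^ (r * (if ((c : ZMod r).val = 0 ∧ P) then 1 else 0) + c.val)
      = (if P then (X : ℚ[X]) else 1) * Sp r := by
  by_cases hP : P
  · simp only [hP, and_true, if_true]
    have key : ∀ c : ZMod r, (X : ℚ[X]) ^ (r * (if c.val = 0 then 1 else 0) + c.val)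
        = X ^ c.val + (if c = 0 then X ^ r - 1 else 0) := by
      intro c
      by_cases hc : c = 0
      · subst hc
        simp [ZMod.val_zero]
      · have h2 : c.val ≠ 0 := fun h => hc ((ZMod.val_eq_zero c).1 h)
        simp [h2, hc]
    rw [Finset.sum_congr rfl (fun c _ => key c), Finset.sum_add_distrib,
      Finset.sum_ite_eq' Finset.univ (0 : ZMod r)]
    simp only [mem_univ, if_true]
    have h5 : ∑ c : ZMod r, (X : ℚ[X]) ^ c.val = Sp r := rfl
    rw [h5]
    linear_combination -hSp r
  · simp only [hP, and_false, if_false, mul_zero, zero_add, one_mul]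
    rfl

noncomputable def Mm (n : ℕ) : Matrix (Fin (n + 1)) (Fin (n + 1)) ℚ[X] :=
  Matrix.of fun i j => if i < j then X else 1

noncomputable def Lm (n : ℕ) : Matrix (Fin (n + 1)) (Fin (n + 1)) ℚ[X] :=
  Matrix.of fun i j => if j ≤ i then 1 else 0

noncomputable def Um (n : ℕ) : Matrix (Fin (n + 1)) (Fin (n + 1)) ℚ[X] :=
  Matrix.of fun i j =>
    if i = 0 then (if j = 0 then 1 else X) else if i = j then 1 - X else 0

lemma MLU (n : ℕ) : Mm n = Lm n * Um n := by
  ext i j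
  rw [Matrix.mul_apply]
  have key : ∀ k : Fin (n + 1), Lm n i k * Um n k j =
      (if k = 0 then (if j = 0 then (1 : ℚ[X]) else X) else 0)
      + (if k = j then (if j = 0 then 0 else if j ≤ i then 1 - X else 0) else 0) := by
    intro k
    simp only [Lm, Um, Matrix.of_apply]
    by_cases hk0 : k = 0
    · subst hk0
      by_cases hj0 : j = 0
      · subst hj0; simp [Fin.zero_le]
      · simp [hj0, Fin.zero_le, (Ne.symm hj0 : (0 : Fin (n+1)) ≠ j)]
    · by_cases hkj : k = j
      · subst hkj
        simp [hk0]
      · simp [hk0, hkj]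
  rw [Finset.sum_congr rfl (fun k _ => key k), Finset.sum_add_distrib,
    Finset.sum_ite_eq' Finset.univ (0 : Fin (n + 1)), Finset.sum_ite_eq' Finset.univ j]
  simp only [mem_univ, if_true, Mm, Matrix.of_apply]
  by_cases hj0 : j = 0
  · subst hj0
    simp
  · rw [if_neg hj0, if_neg hj0]
    by_cases hij : i < j
    · rw [if_pos hij, if_neg (not_le.2 hij), add_zero]
    · rw [if_neg hij, if_pos (not_lt.1 hij)]
      ring

lemma detMm (m : ℕ) : (Mm m).det = (1 - (X : ℚ[X])) ^ m := by
  rw [MLU, Matrix.det_mul]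
  have hL : (Lm m).det = 1 := by
    rw [Matrix.det_of_lowerTriangular _ (by
      intro i j hij
      simp only [Lm, Matrix.of_apply]
      exact if_neg (not_le.2 hij))]
    simp [Lm]
  have hU : (Um m).det = (1 - (X : ℚ[X])) ^ m := by
    rw [Matrix.det_of_upperTriangular (by
      intro i j hij
      simp only [Um, Matrix.of_apply]
      have hi0 : i ≠ 0 := by
        intro h
        subst h
        exact absurd hij (by simp)
      rw [if_neg hi0, if_neg (by intro h; subst h; exact lt_irrefl _ hij)])]
    have h6 : ∀ i : Fin (m+1), Um m i i = if i = 0 then 1 else 1 - X := by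
      intro i
      by_cases hi : i = 0
      · subst hi; simp [Um]
      · simp [Um, hi]
    rw [Finset.prod_congr rfl (fun i _ => h6 i), Fin.prod_univ_succ, if_pos rfl, one_mul]
    have h7 : ∀ i : Fin m, (if (i.succ : Fin (m+1)) = 0 then (1:ℚ[X]) else 1 - X) = 1 - X :=
      fun i => if_neg (Fin.succ_ne_zero i)
    rw [Finset.prod_congr rfl (fun i _ => h7 i), Finset.prod_const]
    simp
  rw [hL, hU, one_mul]

lemma sign_cyc {n : ℕ} (σ : Equiv.Perm (Fin n)) :
    ((-1 : ℚ[X])) ^ cyc σ = (-1) ^ n * ((Equiv.Perm.sign σ : ℤ) : ℚ[X]) := by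
  have h1 : (Finset.univ.filter fun i => σ i = i).card = n - σ.support.card := by
    have h2 : (Finset.univ.filter fun i => σ i = i) = σ.supportᶜ := by
      ext i; simp [Equiv.Perm.mem_support]
    rw [h2, Finset.card_compl]
    simp
  have hs : σ.support.card ≤ n := by
    simpa using Finset.card_le_univ σ.support
  rw [cyc, h1, Equiv.Perm.sign_of_cycleType, Equiv.Perm.sum_cycleType]
  push_cast
  set s := σ.support.card
  set c := Multiset.card σ.cycleType
  have h3 : ((-1 : ℚ[X])) ^ (n - s) = (-1) ^ (n + s) := by
    have h4 : n + s = (n - s) + 2 * s := by omega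
    rw [h4, pow_add, pow_mul]
    simp
  rw [pow_add, h3, pow_add, pow_add]
  ring

lemma detsum (m : ℕ) :
    ∑ σ : Equiv.Perm (Fin (m+1)), ((Equiv.Perm.sign σ : ℤ) : ℚ[X]) *
        X ^ ((Finset.univ.filter fun i => i < σ i).card)
      = (1 - (X : ℚ[X])) ^ m := by
  rw [← detMm, ← Matrix.det_transpose, Matrix.det_apply]
  apply Finset.sum_congr rfl
  intro σ _
  rw [Units.smul_def, zsmul_eq_mul]
  congr 1
  have h8 : ∀ i : Fin (m+1), (Mm m).transpose (σ i) i = if i < σ i then (X:ℚ[X]) else 1 :=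
    fun i => rfl
  rw [Finset.prod_congr rfl (fun i _ => h8 i), Finset.prod_ite, Finset.prod_const,
    Finset.prod_const_one, mul_one]

theorem signed_exc_sum_colored (r n : ℕ) [NeZero r] (hn : 1 ≤ n) :
    ((X : Polynomial ℚ) - 1) *
        ∑ π : (Fin n → ZMod r) × Equiv.Perm (Fin n),
          (-1 : Polynomial ℚ) ^ cyc π.2 * X ^ excc π
      = -(((X : Polynomial ℚ) ^ r - 1) ^ n) := by
  obtain ⟨m, rfl⟩ : ∃ m, n = m + 1 := ⟨n - 1, by omega⟩
  have hstep : ∀ σ : Equiv.Perm (Fin (m+1)),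
      ∑ z : Fin (m+1) → ZMod r, (X : ℚ[X]) ^ excc (z, σ)
        = X ^ ((Finset.univ.filter fun i => i < σ i).card) * Sp r ^ (m+1) := by
    intro σ
    have h1 : ∀ z : Fin (m+1) → ZMod r, (X : ℚ[X]) ^ excc (z, σ) =
        ∏ i, (X : ℚ[X]) ^ (r * (if ((z i).val = 0 ∧ i < σ i) then 1 else 0) + (z i).val) := by
      intro z
      rw [Finset.prod_pow_eq_pow_sum]
      congr 1
      rw [Finset.sum_add_distrib, ← Finset.mul_sum, excc, csumc, excAc, Finset.card_filter]
    have h2 : (∑ z : Fin (m+1) → ZMod r, ∏ i,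
          (X : ℚ[X]) ^ (r * (if ((z i).val = 0 ∧ i < σ i) then 1 else 0) + (z i).val))
        = ∏ i, ∑ c : ZMod r,
          (X : ℚ[X]) ^ (r * (if ((c : ZMod r).val = 0 ∧ i < σ i) then 1 else 0) + c.val) :=
      (Fintype.prod_sum (κ := fun _ : Fin (m+1) => ZMod r)
        (fun i c => (X : ℚ[X]) ^ (r * (if (c.val = 0 ∧ i < σ i) then 1 else 0) + c.val))).symm
    rw [Finset.sum_congr rfl (fun z _ => h1 z), h2]
    rw [Finset.prod_congr rfl (fun i _ => colorsum r (i < σ i)),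
      Finset.prod_mul_distrib, Finset.prod_const, Finset.prod_ite, Finset.prod_const,
      Finset.prod_const_one, mul_one]
    simp
  have hT : ∑ σ : Equiv.Perm (Fin (m+1)), (-1 : ℚ[X]) ^ cyc σ *
      X ^ ((Finset.univ.filter fun i => i < σ i).card) = -((X - 1) ^ m) := by
    calc ∑ σ : Equiv.Perm (Fin (m+1)), (-1 : ℚ[X]) ^ cyc σ *
          X ^ ((Finset.univ.filter fun i => i < σ i).card)
        = ∑ σ : Equiv.Perm (Fin (m+1)), ((-1 : ℚ[X]) ^ (m+1) *
            (((Equiv.Perm.sign σ : ℤ) : ℚ[X]) *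
              X ^ ((Finset.univ.filter fun i => i < σ i).card))) := by
          refine Finset.sum_congr rfl fun σ _ => ?_
          rw [sign_cyc]
          ring
      _ = (-1 : ℚ[X]) ^ (m+1) * (1 - X) ^ m := by rw [← Finset.mul_sum, detsum m]
      _ = -((X - 1) ^ m) := by
          have h9 : ((1 : ℚ[X]) - X) ^ m = (-1) ^ m * (X - 1) ^ m := by
            rw [show ((1 : ℚ[X]) - X) = -1 * (X - 1) by ring, mul_pow]
          rw [h9, ← mul_assoc, ← pow_add, Odd.neg_one_pow (⟨m, by omega⟩ : Odd (m + 1 + m))]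
          ring
  calc ((X : ℚ[X]) - 1) * ∑ π : (Fin (m+1) → ZMod r) × Equiv.Perm (Fin (m+1)),
        (-1 : ℚ[X]) ^ cyc π.2 * X ^ excc π
      = (X - 1) * ∑ σ : Equiv.Perm (Fin (m+1)), ∑ z : Fin (m+1) → ZMod r,
          (-1 : ℚ[X]) ^ cyc σ * X ^ excc (z, σ) := by
        rw [Fintype.sum_prod_type_right]
    _ = (X - 1) * ∑ σ : Equiv.Perm (Fin (m+1)), (-1 : ℚ[X]) ^ cyc σ *
          (X ^ ((Finset.univ.filter fun i => i < σ i).card) * Sp r ^ (m+1)) := by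
        congr 1
        refine Finset.sum_congr rfl fun σ _ => ?_
        rw [← Finset.mul_sum, hstep σ]
    _ = (X - 1) * ((∑ σ : Equiv.Perm (Fin (m+1)), (-1 : ℚ[X]) ^ cyc σ *
          X ^ ((Finset.univ.filter fun i => i < σ i).card)) * Sp r ^ (m+1)) := by
        rw [Finset.sum_mul]
        refine congrArg (fun s => (X - 1) * s) ?_
        refine Finset.sum_congr rfl fun σ _ => ?_
        ring
    _ = -(((X : ℚ[X]) ^ r - 1) ^ (m+1)) := by
        rw [hT, ← hSp r, mul_pow]
        ring
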